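/- Let f : E → [0,∞] be continuously differentiable, meaning f is continuous on E and its gradient ∇f exists and is continuous on dom f. Then f is radial (i.e. both upper and lower radial) if and only if ⟨∇f(x), x⟩ − f(x) ≤ 0 for all x ∈ dom f. -/

import Mathlib

open Set
open scoped ENNReal RealInnerProductSpace

open Filter
open scoped Topology

noncomputable section

variable {E : Type*} [NormedAddCommGroup E] [InnerProductSpace ℝ E] [FiniteDimensional ℝ E]

/-- The perspective function `f^p(y,v) = v·f(y/v)` (for `v > 0`). -/
def persp (f : E → ℝ≥0∞) (y : E) (v : ℝ) : ℝ≥0∞ := ENNReal.ofReal v * f (v⁻¹ • y)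

/-- `f` is upper radial: every `f^p(y,·)` is nondecreasing and upper semicontinuous on `ℝ₊₊`. -/
def UpperRadial (f : E → ℝ≥0∞) : Prop :=
  ∀ y : E, MonotoneOn (persp f y) (Ioi (0 : ℝ)) ∧
    UpperSemicontinuousOn (persp f y) (Ioi (0 : ℝ))

/-- `f` is lower radial: every `f^p(y,·)` is nondecreasing and lower semicontinuous on `ℝ₊₊`. -/
def LowerRadial (f : E → ℝ≥0∞) : Prop :=
  ∀ y : E, MonotoneOn (persp f y) (Ioi (0 : ℝ)) ∧
    LowerSemicontinuousOn (persp f y) (Ioi (0 : ℝ))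

/-- The effective domain `dom f = {x : 0 < f(x) < ∞}`. -/
def effDom (f : E → ℝ≥0∞) : Set E := {x : E | f x ≠ 0 ∧ f x ≠ ⊤}

/-! ### Auxiliary lemmas -/

lemma persp_eq_ofReal (f : E → ℝ≥0∞) (y : E) {v : ℝ} (hv : 0 < v)
    (hfin : f (v⁻¹ • y) ≠ ⊤) :
    persp f y v = ENNReal.ofReal (v * (f (v⁻¹ • y)).toReal) := by
  rw [persp, ENNReal.ofReal_mul hv.le, ENNReal.ofReal_toReal hfin]

lemma persp_continuousOn (f : E → ℝ≥0∞) (hcont : Continuous f) (y : E) :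
    ContinuousOn (persp f y) (Ioi (0 : ℝ)) := by
  have : ContinuousOn (fun v : ℝ => ENNReal.ofReal v * f (v⁻¹ • y)) (Ioi (0 : ℝ)) := by
    apply ContinuousOn.ennreal_mul
    · exact ENNReal.continuous_ofReal.continuousOn
    · intro v hv
      exact (hcont.continuousAt.comp
        ((continuousAt_inv₀ (ne_of_gt hv)).smul continuousAt_const)).continuousWithinAt
    · intro v hv; exact Or.inl (ENNReal.ofReal_pos.2 hv).ne'
    · intro v hv; exact Or.inr ENNReal.ofReal_ne_top
  exact this

/-- Derivative of `h(w) = w * (f (w⁻¹ • y)).toReal`. -/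
lemma hasDerivAt_h (f : E → ℝ≥0∞) (g : E → E) (y : E) {v : ℝ} (hv : 0 < v)
    (hx : HasGradientAt (fun z => (f z).toReal) (g (v⁻¹ • y)) (v⁻¹ • y)) :
    HasDerivAt (fun w : ℝ => w * (f (w⁻¹ • y)).toReal)
      ((f (v⁻¹ • y)).toReal - ⟪g (v⁻¹ • y), v⁻¹ • y⟫) v := by
  have h1 : HasDerivAt (fun w : ℝ => w⁻¹ • y) ((-(v ^ 2)⁻¹) • y) v :=
    (hasDerivAt_inv hv.ne').smul_const y
  have h2 := (hx.hasFDerivAt.comp_hasDerivAt v h1)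
  have h3 := (hasDerivAt_id v).mul h2
  convert h3 using 1
  · rfl
  · rfl
  · rfl
  have e1 : (InnerProductSpace.toDual ℝ E (g (v⁻¹ • y))) ((-(v ^ 2)⁻¹) • y)
      = (-(v ^ 2)⁻¹) * ⟪g (v⁻¹ • y), y⟫ := by
    rw [InnerProductSpace.toDual_apply_apply, real_inner_smul_right]
  have e2 : ⟪g (v⁻¹ • y), v⁻¹ • y⟫ = v⁻¹ * ⟪g (v⁻¹ • y), y⟫ := real_inner_smul_right _ _ _
  rw [e1, e2]
  have hvne : v ≠ 0 := hv.ne'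
  field_simp
  simp only [Function.comp_apply, id]
  ring

lemma continuousAt_hF (f : E → ℝ≥0∞) (hcont : Continuous f) (y : E) {v : ℝ}
    (hv : v ≠ 0) (hfin : f (v⁻¹ • y) ≠ ⊤) :
    ContinuousAt (fun w : ℝ => (f (w⁻¹ • y)).toReal) v := by
  have hray : ContinuousAt (fun w : ℝ => f (w⁻¹ • y)) v :=
    hcont.continuousAt.comp ((continuousAt_inv₀ hv).smul continuousAt_const)
  exact (ENNReal.tendsto_toReal hfin).comp hray

/-- Monotonicity of `h` from the derivative inequality, assuming no `⊤` values on `[a,b]`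
and that `f` is nonzero at the left endpoint. -/
lemma h_mono (f : E → ℝ≥0∞) (g : E → E) (hcont : Continuous f)
    (hgrad : ∀ x ∈ effDom f, HasGradientAt (fun z => (f z).toReal) (g x) x)
    (hineq : ∀ x ∈ effDom f, ⟪g x, x⟫ - (f x).toReal ≤ 0)
    (y : E) {a b : ℝ} (ha : 0 < a) (hab : a ≤ b)
    (hfin : ∀ v ∈ Icc a b, f (v⁻¹ • y) ≠ ⊤) (hne : f (a⁻¹ • y) ≠ 0) :
    a * (f (a⁻¹ • y)).toReal ≤ b * (f (b⁻¹ • y)).toReal := by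
  set h : ℝ → ℝ := fun w => w * (f (w⁻¹ • y)).toReal with hh
  have key : ∀ d, d ∈ Icc a b → (∀ v ∈ Ico a d, f (v⁻¹ • y) ≠ 0) →
      MonotoneOn h (Icc a d) := by
    intro d hd hz
    have hdiff : ∀ v ∈ Ioo a d, HasDerivAt h
        ((f (v⁻¹ • y)).toReal - ⟪g (v⁻¹ • y), v⁻¹ • y⟫) v := by
      intro v hv
      have hv0 : 0 < v := ha.trans hv.1
      have hmem : v⁻¹ • y ∈ effDom f :=
        ⟨hz v ⟨hv.1.le, hv.2⟩, hfin v ⟨hv.1.le, hv.2.le.trans hd.2⟩⟩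
      exact hasDerivAt_h f g y hv0 (hgrad _ hmem)
    apply monotoneOn_of_deriv_nonneg (convex_Icc a d)
    · intro v hv
      have hv0 : 0 < v := lt_of_lt_of_le ha hv.1
      exact (continuousAt_id.mul (continuousAt_hF f hcont y hv0.ne'
        (hfin v ⟨hv.1, hv.2.trans hd.2⟩))).continuousWithinAt
    · rw [interior_Icc]
      intro v hv
      exact ((hdiff v hv).differentiableAt).differentiableWithinAt
    · rw [interior_Icc]
      intro v hv
      rw [(hdiff v hv).deriv]
      have hv0 : 0 < v := ha.trans hv.1
      have hmem : v⁻¹ • y ∈ effDom f :=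
        ⟨hz v ⟨hv.1.le, hv.2⟩, hfin v ⟨hv.1.le, hv.2.le.trans hd.2⟩⟩
      have := hineq _ hmem
      linarith
  by_cases hZ : ∃ v ∈ Icc a b, f (v⁻¹ • y) = 0
  · exfalso
    set Z : Set ℝ := {v | v ∈ Icc a b ∧ f (v⁻¹ • y) = 0} with hZdef
    have hZne : Z.Nonempty := hZ
    have hφ : ContinuousOn (fun v : ℝ => f (v⁻¹ • y)) (Icc a b) := by
      intro v hv
      exact (hcont.continuousAt.comp
        ((continuousAt_inv₀ (ha.trans_le hv.1).ne').smul continuousAt_const)).continuousWithinAt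
    have hZcl : IsClosed Z := by
      have := hφ.preimage_isClosed_of_isClosed isClosed_Icc (isClosed_singleton (x := (0 : ℝ≥0∞)))
      convert this using 1
      rfl
    have hZbdd : BddBelow Z := ⟨a, fun v hv => hv.1.1⟩
    set d := sInf Z with hd
    have hdZ : d ∈ Z := hZcl.csInf_mem hZne hZbdd
    have had : a < d := by
      rcases lt_or_eq_of_le hdZ.1.1 with h | h
      · exact h
      · exact absurd hdZ.2 (by rw [← h]; exact hne)
    have hmono := key d hdZ.1 (fun v hv hv0 => absurd (csInf_le hZbdd ⟨⟨hv.1, hv.2.le.trans hdZ.1.2⟩, hv0⟩) (not_le.mpr hv.2))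
    have hle : h a ≤ h d := hmono ⟨le_rfl, had.le⟩ ⟨had.le, le_rfl⟩ had.le
    have hd0 : h d = 0 := by simp [hh, hdZ.2]
    have hapos : 0 < h a :=
      mul_pos ha (ENNReal.toReal_pos hne (hfin a ⟨le_rfl, hab⟩))
    rw [hd0] at hle
    linarith
  · push_neg at hZ
    exact key b ⟨hab, le_rfl⟩ (fun v hv => hZ v ⟨hv.1, hv.2.le⟩)
      ⟨le_rfl, hab⟩ ⟨hab, le_rfl⟩ hab

/-- If `f` is finite at `b⁻¹ • y` it is finite all along `[a,b]`. -/
lemma no_top (f : E → ℝ≥0∞) (g : E → E) (hcont : Continuous f)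
    (hgrad : ∀ x ∈ effDom f, HasGradientAt (fun z => (f z).toReal) (g x) x)
    (hineq : ∀ x ∈ effDom f, ⟪g x, x⟫ - (f x).toReal ≤ 0)
    (y : E) {a b : ℝ} (ha : 0 < a) (hab : a ≤ b)
    (hfb : f (b⁻¹ • y) ≠ ⊤) : ∀ v ∈ Icc a b, f (v⁻¹ • y) ≠ ⊤ := by
  by_contra hS
  push_neg at hS
  obtain ⟨w, hw, hwt⟩ := hS
  set S : Set ℝ := {v | v ∈ Icc a b ∧ f (v⁻¹ • y) = ⊤} with hSdef
  have hSne : S.Nonempty := ⟨w, hw, hwt⟩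
  have hφ : ContinuousOn (fun v : ℝ => f (v⁻¹ • y)) (Icc a b) := by
    intro v hv
    exact (hcont.continuousAt.comp
      ((continuousAt_inv₀ (ha.trans_le hv.1).ne').smul continuousAt_const)).continuousWithinAt
  have hScl : IsClosed S := by
    have := hφ.preimage_isClosed_of_isClosed isClosed_Icc (isClosed_singleton (x := (⊤ : ℝ≥0∞)))
    convert this using 1
    rfl
  have hSbdd : BddAbove S := ⟨b, fun v hv => hv.1.2⟩
  set c := sSup S with hc
  have hcS : c ∈ S := hScl.csSup_mem hSne hSbdd
  have hc0 : 0 < c := ha.trans_le hcS.1.1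
  have hcb : c < b := lt_of_le_of_ne hcS.1.2 (fun h => hfb (h ▸ hcS.2))
  set v0 := (c + b) / 2 with hv0
  have hcv0 : c < v0 := by rw [hv0]; linarith
  have hv0b : v0 < b := by rw [hv0]; linarith
  have hfin' : ∀ v, c < v → v ≤ b → f (v⁻¹ • y) ≠ ⊤ := by
    intro v h1 h2 hveq
    exact absurd (le_csSup hSbdd ⟨⟨hcS.1.1.trans h1.le, h2⟩, hveq⟩)
      (not_le.mpr h1)
  set Hb := v0 * (f (v0⁻¹ • y)).toReal with hHb
  set M := max (Hb / c) 0 + 1 with hM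
  have hMpos : 0 < M := by positivity
  have hray : ContinuousAt (fun w : ℝ => f (w⁻¹ • y)) c :=
    hcont.continuousAt.comp ((continuousAt_inv₀ hc0.ne').smul continuousAt_const)
  have hev : ∀ᶠ v in 𝓝[>] c, ENNReal.ofReal M < f (v⁻¹ • y) := by
    have hmem : Ioi (ENNReal.ofReal M) ∈ 𝓝 (f (c⁻¹ • y)) := by
      rw [hcS.2]
      exact Ioi_mem_nhds ENNReal.ofReal_lt_top
    exact (hray.mono_left nhdsWithin_le_nhds).eventually_mem hmem
  have hIoo : Ioo c v0 ∈ 𝓝[>] c := Ioo_mem_nhdsGT_of_mem ⟨le_rfl, hcv0⟩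
  have hIoo' : ∀ᶠ v in 𝓝[>] c, v ∈ Ioo c v0 := hIoo
  obtain ⟨v, hvf, hvIoo⟩ := (hev.and hIoo').exists
  have hvb : v ≤ b := hvIoo.2.le.trans hv0b.le
  have hfinv : f (v⁻¹ • y) ≠ ⊤ := hfin' v hvIoo.1 hvb
  have hnev : f (v⁻¹ • y) ≠ 0 := ((ENNReal.ofReal_pos.2 hMpos).trans hvf).ne'
  have hv0pos : 0 < v := hc0.trans hvIoo.1
  have hfinIcc : ∀ u ∈ Icc v v0, f (u⁻¹ • y) ≠ ⊤ := fun u hu =>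
    hfin' u (hvIoo.1.trans_le hu.1) (hu.2.trans hv0b.le)
  have hmle := h_mono f g hcont hgrad hineq y hv0pos hvIoo.2.le hfinIcc hnev
  have hT : M < (f (v⁻¹ • y)).toReal := by
    rw [← ENNReal.ofReal_lt_iff_lt_toReal hMpos.le hfinv]
    exact hvf
  have hcM : Hb < c * M := by
    have h1 : Hb / c < M := by
      rw [hM]; exact (le_max_left _ _).trans_lt (lt_add_one _)
    calc Hb = (Hb / c) * c := by field_simp
    _ < M * c := by exact mul_lt_mul_of_pos_right h1 hc0
    _ = c * M := mul_comm _ _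
  have hvT : c * M < v * (f (v⁻¹ • y)).toReal := by
    apply mul_lt_mul' hvIoo.1.le hT hMpos.le hv0pos
  have hfinal : Hb < Hb := (hcM.trans hvT).trans_le (by rw [hHb]; exact hmle)
  exact lt_irrefl _ hfinal

/-- Monotonicity of all perspective functions implies the gradient inequality. -/
lemma mono_imp_ineq (f : E → ℝ≥0∞) (g : E → E) (hcont : Continuous f)
    (hgrad : ∀ x ∈ effDom f, HasGradientAt (fun z => (f z).toReal) (g x) x)
    (hmono : ∀ y, MonotoneOn (persp f y) (Ioi (0 : ℝ))) :
    ∀ x ∈ effDom f, ⟪g x, x⟫ - (f x).toReal ≤ 0 := by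
  intro x hx
  have hgx : HasGradientAt (fun z => (f z).toReal) (g ((1 : ℝ)⁻¹ • x)) ((1 : ℝ)⁻¹ • x) := by
    rw [inv_one, one_smul]; exact hgrad x hx
  have hD := hasDerivAt_h f g x one_pos hgx
  rw [inv_one, one_smul] at hD
  set h : ℝ → ℝ := fun w => w * (f (w⁻¹ • x)).toReal with hh
  have hslope : Tendsto (slope h 1) (𝓝[>] (1:ℝ)) (𝓝 ((f x).toReal - ⟪g x, x⟫)) :=
    (hasDerivAt_iff_tendsto_slope.mp hD).mono_left
      (nhdsWithin_mono 1 (fun v hv => ne_of_gt hv))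
  have hevfin : ∀ᶠ v in 𝓝[>] (1:ℝ), f (v⁻¹ • x) ≠ ⊤ := by
    have hray : ContinuousAt (fun w : ℝ => f (w⁻¹ • x)) 1 :=
      hcont.continuousAt.comp ((continuousAt_inv₀ one_ne_zero).smul continuousAt_const)
    have hmem : {q : ℝ≥0∞ | q ≠ ⊤} ∈ 𝓝 (f ((1:ℝ)⁻¹ • x)) := by
      rw [inv_one, one_smul]
      exact ENNReal.isOpen_ne_top.mem_nhds hx.2
    exact (hray.mono_left nhdsWithin_le_nhds).eventually_mem hmem
  have hnn : ∀ᶠ v in 𝓝[>] (1:ℝ), 0 ≤ slope h 1 v := by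
    filter_upwards [hevfin, self_mem_nhdsWithin] with v hfinv hv1
    have hv1 : (1:ℝ) < v := hv1
    have hv0 : (0:ℝ) < v := one_pos.trans hv1
    have hmle := (hmono x) (mem_Ioi.mpr one_pos) (mem_Ioi.mpr hv0) hv1.le
    have hfin1 : f ((1:ℝ)⁻¹ • x) ≠ ⊤ := by rw [inv_one, one_smul]; exact hx.2
    rw [persp_eq_ofReal f x one_pos hfin1, persp_eq_ofReal f x hv0 hfinv] at hmle
    have hle : h 1 ≤ h v :=
      (ENNReal.ofReal_le_ofReal_iff (by positivity)).1 hmle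
    rw [slope_def_field]
    apply div_nonneg (by linarith) (by linarith)
  have := ge_of_tendsto hslope hnn
  linarith

/-- A continuously differentiable `f` (continuous on `E`, with gradient `g` existing and
continuous on `dom f`) is radial (both upper and lower radial) iff
`⟨∇f(x), x⟩ − f(x) ≤ 0` for all `x ∈ dom f`. -/
theorem differentiable_radial_characterization (f : E → ℝ≥0∞) (g : E → E)
    (hcont : Continuous f)
    (hgrad : ∀ x ∈ effDom f, HasGradientAt (fun z => (f z).toReal) (g x) x)
    (hgcont : ContinuousOn g (effDom f)) :
    (UpperRadial f ∧ LowerRadial f) ↔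
      ∀ x ∈ effDom f, ⟪g x, x⟫ - (f x).toReal ≤ 0 := by
  constructor
  · rintro ⟨hu, _⟩
    exact mono_imp_ineq f g hcont hgrad (fun y => (hu y).1)
  · intro hineq
    have hmono : ∀ y, MonotoneOn (persp f y) (Ioi (0 : ℝ)) := by
      intro y a ha b hb hab
      rw [mem_Ioi] at ha hb
      by_cases hfb : f (b⁻¹ • y) = ⊤
      · have : persp f y b = ⊤ := by
          rw [persp, hfb, ENNReal.mul_top (ENNReal.ofReal_pos.2 hb).ne']
        rw [this]; exact le_top
      by_cases hfa : f (a⁻¹ • y) = 0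
      · rw [persp, hfa, mul_zero]; exact zero_le
      have hfin := no_top f g hcont hgrad hineq y ha hab hfb
      have hle := h_mono f g hcont hgrad hineq y ha hab hfin hfa
      rw [persp_eq_ofReal f y ha (hfin a ⟨le_rfl, hab⟩),
        persp_eq_ofReal f y hb (hfin b ⟨hab, le_rfl⟩)]
      exact ENNReal.ofReal_le_ofReal hle
    exact ⟨fun y => ⟨hmono y, (persp_continuousOn f hcont y).upperSemicontinuousOn⟩,
      fun y => ⟨hmono y, (persp_continuousOn f hcont y).lowerSemicontinuousOn⟩⟩
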